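/- Let T > 0, and let g : [0,T] → ℝ be a nonnegative continuous function and h : [0,T] → ℝ a nonnegative integrable function. Suppose a nonnegative continuous function y : [0,T] → ℝ satisfies y(t) ≤ C(1 + y₀) + C∫₀ᵗ h(τ) y(τ) log(y(τ)) dτ for all t, where C ≥ 1, y₀ ≥ 0, and y(t) ≥ e for all t. Then y(t) ≤ (C(1+y₀))^{exp(C ∫₀ᵗ h(τ)dτ)} for all t ∈ [0,T]. -/

import Mathlib

open MeasureTheory Set


lemma key_int (T : ℝ) (h φ Φ : ℝ → ℝ)
    (hh_int : IntegrableOn h (Icc 0 T))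
    (hh_nn : ∀ τ ∈ Icc 0 T, 0 ≤ h τ)
    (hφ_mono : Monotone φ) (hφ_cont : Continuous φ)
    (hΦ : ∀ x, HasDerivAt Φ (φ x) x)
    (t : ℝ) (ht0 : 0 ≤ t) (htT : t ≤ T) :
    ∫ τ in Ioc 0 t, h τ * φ (∫ σ in Ioc 0 τ, h σ) ≤
      Φ (∫ σ in Ioc 0 t, h σ) - Φ 0 := by
  set H : ℝ → ℝ := fun s => ∫ σ in Ioc 0 s, h σ with hHdef
  have hT0 : (0:ℝ) ≤ T := le_trans ht0 htT
  have hH0 : H 0 = 0 := by simp [hHdef]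
  have hsub : ∀ a b : ℝ, 0 ≤ a → b ≤ T → Ioc a b ⊆ Icc 0 T := by
    intro a b ha hb τ hτ
    exact ⟨le_of_lt (lt_of_le_of_lt ha hτ.1), le_trans hτ.2 hb⟩
  have hint : ∀ a b : ℝ, 0 ≤ a → b ≤ T → IntegrableOn h (Ioc a b) := by
    intro a b ha hb
    exact hh_int.mono_set (hsub a b ha hb)
  have hHab : ∀ a b : ℝ, 0 ≤ a → a ≤ b → b ≤ T →
      H b = H a + ∫ σ in Ioc a b, h σ := by
    intro a b ha hab hb
    have hu : Ioc (0:ℝ) a ∪ Ioc a b = Ioc 0 b := Ioc_union_Ioc_eq_Ioc ha hab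
    rw [hHdef]
    simp only
    rw [← hu, setIntegral_union (Ioc_disjoint_Ioc_of_le le_rfl) measurableSet_Ioc
      (hint 0 a le_rfl (le_trans hab hb)) (hint a b ha hb)]
  have hHmono : ∀ a b : ℝ, 0 ≤ a → a ≤ b → b ≤ T → H a ≤ H b := by
    intro a b ha hab hb
    rw [hHab a b ha hab hb]
    have : 0 ≤ ∫ σ in Ioc a b, h σ :=
      setIntegral_nonneg measurableSet_Ioc fun τ hτ => hh_nn τ (hsub a b ha hb hτ)
    linarith
  have hHnn : ∀ a : ℝ, 0 ≤ a → a ≤ T → 0 ≤ H a := by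
    intro a ha haT
    rw [← hH0]; exact hHmono 0 a le_rfl ha haT
  have hH_cont : ContinuousOn H (Icc 0 T) := intervalIntegral.continuousOn_primitive hh_int
  have hφH_cont : ContinuousOn (fun τ => φ (H τ)) (Icc 0 T) :=
    hφ_cont.comp_continuousOn hH_cont
  have hg_int : IntegrableOn (fun τ => h τ * φ (H τ)) (Icc 0 T) :=
    hh_int.mul_continuousOn_of_subset hφH_cont measurableSet_Icc isCompact_Icc Subset.rfl
  have hφdiff_nn : 0 ≤ φ (H t) - φ 0 := by
    have := hφ_mono (hHnn t ht0 htT); linarith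
  have main : ∀ δ : ℝ, 0 < δ →
      (∫ τ in Ioc 0 t, h τ * φ (H τ)) ≤ Φ (H t) - Φ 0 + δ * (φ (H t) - φ 0) := by
    intro δ hδ
    rcases eq_or_lt_of_le ht0 with rfl | htpos
    · have h1 : Ioc (0:ℝ) 0 = ∅ := Ioc_self 0
      rw [h1, hH0]
      simp
    obtain ⟨δ', hδ'pos, hδ'⟩ := Metric.uniformContinuousOn_iff.mp
      ((isCompact_Icc : IsCompact (Icc (0:ℝ) t)).uniformContinuousOn_of_continuous
        (hH_cont.mono (Icc_subset_Icc le_rfl htT))) δ hδ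
    obtain ⟨n, hn⟩ := exists_nat_gt (t / δ')
    have hnpos : 0 < (n:ℝ) := lt_trans (div_pos htpos hδ'pos) hn
    have hstep : t / n < δ' := by
      rw [div_lt_iff₀ hnpos]
      rw [div_lt_iff₀ hδ'pos] at hn
      linarith
    have hstep_nn : 0 ≤ t / n := div_nonneg ht0 hnpos.le
    set s : ℕ → ℝ := fun i => (i : ℝ) * (t / n) with hsdef
    have hs0 : s 0 = 0 := by simp [hsdef]
    have hsn : s n = t := by
      rw [hsdef]; field_simp
    have hsmem : ∀ i : ℕ, i ≤ n → s i ∈ Icc 0 t := by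
      intro i hi
      constructor
      · exact mul_nonneg (Nat.cast_nonneg i) hstep_nn
      · rw [← hsn]
        exact mul_le_mul_of_nonneg_right (Nat.cast_le.mpr hi) hstep_nn
    have hadj : ∀ i : ℕ, i < n → s i ≤ s (i + 1) := by
      intro i hi
      apply mul_le_mul_of_nonneg_right _ hstep_nn
      exact_mod_cast Nat.le_succ i
    have hgi : ∀ i < n, IntervalIntegrable (fun τ => h τ * φ (H τ)) volume (s i) (s (i+1)) := by
      intro i hi
      rw [intervalIntegrable_iff_integrableOn_Ioc_of_le (hadj i hi)]
      exact hg_int.mono_set (hsub _ _ (hsmem i hi.le).1 (le_trans (hsmem (i+1) hi).2 htT))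
    have split : ∫ τ in Ioc 0 t, h τ * φ (H τ) =
        ∑ i ∈ Finset.range n, ∫ τ in (s i)..(s (i+1)), h τ * φ (H τ) := by
      rw [intervalIntegral.sum_integral_adjacent_intervals hgi, hs0, hsn,
        intervalIntegral.integral_of_le ht0]
    have key : ∀ i ∈ Finset.range n, (∫ τ in (s i)..(s (i+1)), h τ * φ (H τ)) ≤
        (Φ (H (s (i+1))) - Φ (H (s i))) + δ * (φ (H (s (i+1))) - φ (H (s i))) := by
      intro i hi'
      have hi : i < n := Finset.mem_range.mp hi'
      have hsi := hsmem i hi.le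
      have hsi1 := hsmem (i+1) hi
      have hsiT : s (i+1) ≤ T := le_trans hsi1.2 htT
      have hab : s i ≤ s (i+1) := hadj i hi
      have hHa_le : H (s i) ≤ H (s (i+1)) := hHmono _ _ hsi.1 hab hsiT
      have hΔ : H (s (i+1)) - H (s i) ≤ δ := by
        have hdist : dist (s (i+1)) (s i) < δ' := by
          rw [Real.dist_eq, abs_of_nonneg (by linarith)]
          have : s (i+1) - s i = t / n := by
            rw [hsdef]; push_cast; ring
          rw [this]; exact hstep
        have := hδ' (s (i+1)) hsi1 (s i) hsi hdist
        rw [Real.dist_eq, abs_of_nonneg (by linarith)] at this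
        linarith
      have hΔnn : 0 ≤ H (s (i+1)) - H (s i) := by linarith
      have hφd : φ (H (s i)) ≤ φ (H (s (i+1))) := hφ_mono hHa_le
      have hintab : (∫ σ in Ioc (s i) (s (i+1)), h σ) = H (s (i+1)) - H (s i) := by
        rw [hHab _ _ hsi.1 hab hsiT]; ring
      have step1 : (∫ τ in (s i)..(s (i+1)), h τ * φ (H τ)) ≤
          φ (H (s (i+1))) * (H (s (i+1)) - H (s i)) := by
        rw [intervalIntegral.integral_of_le hab]
        have hmono : ∫ τ in Ioc (s i) (s (i+1)), h τ * φ (H τ) ≤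
            ∫ τ in Ioc (s i) (s (i+1)), h τ * φ (H (s (i+1))) := by
          apply setIntegral_mono_on
          · exact hg_int.mono_set (hsub _ _ hsi.1 hsiT)
          · exact (hint _ _ hsi.1 hsiT).mul_const _
          · exact measurableSet_Ioc
          · intro τ hτ
            have hτIcc : τ ∈ Icc 0 T := hsub _ _ hsi.1 hsiT hτ
            have : H τ ≤ H (s (i+1)) := hHmono τ _ hτIcc.1 hτ.2 hsiT
            exact mul_le_mul_of_nonneg_left (hφ_mono this) (hh_nn τ hτIcc)
        calc (∫ τ in Ioc (s i) (s (i+1)), h τ * φ (H τ))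
            ≤ ∫ τ in Ioc (s i) (s (i+1)), h τ * φ (H (s (i+1))) := hmono
          _ = (∫ τ in Ioc (s i) (s (i+1)), h τ) * φ (H (s (i+1))) := by
              rw [integral_mul_const]
          _ = φ (H (s (i+1))) * (H (s (i+1)) - H (s i)) := by rw [hintab]; ring
      have conv : φ (H (s i)) * (H (s (i+1)) - H (s i)) ≤ Φ (H (s (i+1))) - Φ (H (s i)) := by
        have hFTC : Φ (H (s (i+1))) - Φ (H (s i)) = ∫ x in (H (s i))..(H (s (i+1))), φ x :=
          (intervalIntegral.integral_eq_sub_of_hasDerivAt (fun x _ => hΦ x)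
            (hφ_cont.intervalIntegrable _ _)).symm
        have hlow : (∫ x in (H (s i))..(H (s (i+1))), φ (H (s i))) ≤
            ∫ x in (H (s i))..(H (s (i+1))), φ x :=
          intervalIntegral.integral_mono_on hHa_le intervalIntegrable_const
            (hφ_cont.intervalIntegrable _ _) (fun x hx => hφ_mono hx.1)
        rw [hFTC]
        calc φ (H (s i)) * (H (s (i+1)) - H (s i))
            = ∫ x in (H (s i))..(H (s (i+1))), φ (H (s i)) := by
              rw [intervalIntegral.integral_const, smul_eq_mul]; ring
          _ ≤ _ := hlow
      nlinarith [step1, conv, mul_le_mul_of_nonneg_left hΔ (sub_nonneg.mpr hφd)]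
    calc (∫ τ in Ioc 0 t, h τ * φ (H τ))
        = ∑ i ∈ Finset.range n, ∫ τ in (s i)..(s (i+1)), h τ * φ (H τ) := split
      _ ≤ ∑ i ∈ Finset.range n, ((Φ (H (s (i+1))) - Φ (H (s i))) +
            δ * (φ (H (s (i+1))) - φ (H (s i)))) := Finset.sum_le_sum key
      _ = (Φ (H (s n)) - Φ (H (s 0))) + δ * (φ (H (s n)) - φ (H (s 0))) := by
          rw [Finset.sum_add_distrib, Finset.sum_range_sub (fun i => Φ (H (s i))),
            ← Finset.mul_sum, Finset.sum_range_sub (fun i => φ (H (s i)))]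
      _ = Φ (H t) - Φ 0 + δ * (φ (H t) - φ 0) := by rw [hs0, hsn, hH0]
  refine le_of_forall_pos_le_add fun ε hε => ?_
  have hδpos : 0 < ε / (φ (H t) - φ 0 + 1) := div_pos hε (by linarith)
  have hle := main _ hδpos
  have hsmall : ε / (φ (H t) - φ 0 + 1) * (φ (H t) - φ 0) ≤ ε := by
    rw [div_mul_eq_mul_div, div_le_iff₀ (by linarith)]
    nlinarith
  linarith

/-- Logarithmic Gronwall inequality: if `y ≥ e` is continuous, `h ≥ 0` is
integrable, `C ≥ 1`, `y₀ ≥ 0` and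
`y(t) ≤ C(1+y₀) + C∫₀ᵗ h(τ) y(τ) log y(τ) dτ`, then
`y(t) ≤ (C(1+y₀))^(exp(C∫₀ᵗ h))`. -/
theorem log_gronwall
    (T : ℝ) (hT : 0 < T) (C y₀ : ℝ) (hC : 1 ≤ C) (hy₀ : 0 ≤ y₀)
    (y h : ℝ → ℝ)
    (hy_cont : ContinuousOn y (Set.Icc 0 T))
    (hy_ge : ∀ t ∈ Set.Icc 0 T, Real.exp 1 ≤ y t)
    (hh_nonneg : ∀ t ∈ Set.Icc 0 T, 0 ≤ h t)
    (hh_int : IntegrableOn h (Set.Icc 0 T))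
    (hineq : ∀ t ∈ Set.Icc 0 T,
      y t ≤ C * (1 + y₀) + C * ∫ τ in Set.Ioc 0 t, h τ * y τ * Real.log (y τ)) :
    ∀ t ∈ Set.Icc 0 T,
      y t ≤ (C * (1 + y₀)) ^ Real.exp (C * ∫ τ in Set.Ioc 0 t, h τ) := by
  have hC0 : (0:ℝ) < C := lt_of_lt_of_le one_pos hC
  set a : ℝ := C * (1 + y₀) with ha_def
  have h0mem : (0:ℝ) ∈ Icc 0 T := ⟨le_rfl, hT.le⟩
  have he_le_a : Real.exp 1 ≤ a := by
    have h1 := hineq 0 h0mem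
    rw [Set.Ioc_self] at h1
    simp only [Measure.restrict_empty, integral_zero_measure, mul_zero, add_zero] at h1
    exact le_trans (hy_ge 0 h0mem) h1
  have ha_pos : 0 < a := lt_of_lt_of_le (Real.exp_pos 1) he_le_a
  set K : ℝ := Real.log a with hK_def
  have hK1 : 1 ≤ K := by
    have := Real.log_le_log (Real.exp_pos 1) he_le_a
    rwa [Real.log_exp] at this
  have haK : a = Real.exp K := (Real.exp_log ha_pos).symm
  set H : ℝ → ℝ := fun s => ∫ τ in Ioc 0 s, h τ with hH_def
  have hH_cont : ContinuousOn H (Icc 0 T) := intervalIntegral.continuousOn_primitive hh_int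
  have hone_le_e : (1:ℝ) ≤ Real.exp 1 := by linarith [Real.add_one_le_exp 1]
  have hy_pos : ∀ s ∈ Icc 0 T, 0 < y s := fun s hs =>
    lt_of_lt_of_le (Real.exp_pos 1) (hy_ge s hs)
  have hy1 : ∀ s ∈ Icc 0 T, 1 ≤ y s := fun s hs => le_trans hone_le_e (hy_ge s hs)
  have hyly_cont : ContinuousOn (fun τ => y τ * Real.log (y τ)) (Icc 0 T) :=
    hy_cont.mul (hy_cont.log fun τ hτ => ne_of_gt (hy_pos τ hτ))
  have hint1 : IntegrableOn (fun τ => h τ * (y τ * Real.log (y τ))) (Icc 0 T) :=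
    hh_int.mul_continuousOn_of_subset hyly_cont measurableSet_Icc isCompact_Icc Subset.rfl
  -- Step 1
  have step1 : ∀ ε : ℝ, 0 < ε → ∀ u ∈ Icc 0 T,
      y u ≤ Real.exp ((K + ε) * Real.exp (C * H u)) := by
    intro ε hε
    by_contra hcon
    push_neg at hcon
    obtain ⟨u, hu, hlt⟩ := hcon
    set B : ℝ → ℝ := fun s => Real.exp ((K + ε) * Real.exp (C * H s)) with hB_def
    set S : Set ℝ := {s ∈ Icc 0 T | B s ≤ y s} with hS_def
    have hKε : 0 < K + ε := by linarith
    have hB_cont : ContinuousOn B (Icc 0 T) := by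
      apply Real.continuous_exp.comp_continuousOn
      exact continuousOn_const.mul
        (Real.continuous_exp.comp_continuousOn (continuousOn_const.mul hH_cont))
    have hSne : S.Nonempty := ⟨u, hu, hlt.le⟩
    have hSbdd : BddBelow S := ⟨0, fun x hx => hx.1.1⟩
    have hSclosed : IsClosed S := by
      have : S = Icc 0 T ∩ (fun s => y s - B s) ⁻¹' Ici 0 := by
        ext s; simp [hS_def, sub_nonneg, and_comm]
      rw [this]
      exact (hy_cont.sub hB_cont).preimage_isClosed_of_isClosed isClosed_Icc isClosed_Ici
    set m : ℝ := sInf S with hm_def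
    have hmS : m ∈ S := hSclosed.csInf_mem hSne hSbdd
    have hm : m ∈ Icc 0 T := hmS.1
    have hBm : B m ≤ y m := hmS.2
    have hless : ∀ τ, 0 < τ → τ < m → y τ ≤ B τ := by
      intro τ h0 hτm
      by_contra hc
      push_neg at hc
      have hτS : τ ∈ S := ⟨⟨h0.le, le_trans hτm.le hm.2⟩, hc.le⟩
      have := csInf_le hSbdd hτS
      linarith
    set φ : ℝ → ℝ := fun x => (K + ε) * Real.exp (C * x) *
      Real.exp ((K + ε) * Real.exp (C * x)) with hφ_def
    set Φ : ℝ → ℝ := fun x => (1 / C) * Real.exp ((K + ε) * Real.exp (C * x)) with hΦ_def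
    have hφ_mono : Monotone φ := by
      intro x₁ x₂ hx
      have h1 : Real.exp (C * x₁) ≤ Real.exp (C * x₂) :=
        Real.exp_le_exp.mpr (mul_le_mul_of_nonneg_left hx hC0.le)
      have h2 : (K + ε) * Real.exp (C * x₁) ≤ (K + ε) * Real.exp (C * x₂) :=
        mul_le_mul_of_nonneg_left h1 hKε.le
      exact mul_le_mul h2 (Real.exp_le_exp.mpr h2) (Real.exp_pos _).le
        (by positivity)
    have hφ_cont : Continuous φ := by
      apply Continuous.mul
      · exact continuous_const.mul (Real.continuous_exp.comp (continuous_const.mul continuous_id))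
      · exact Real.continuous_exp.comp
          (continuous_const.mul (Real.continuous_exp.comp (continuous_const.mul continuous_id)))
    have hΦ_deriv : ∀ x, HasDerivAt Φ (φ x) x := by
      intro x
      have h1 : HasDerivAt (fun x : ℝ => C * x) C x := by
        simpa using (hasDerivAt_id x).const_mul C
      have h2 := h1.exp
      have h3 := (h2.const_mul (K + ε)).exp
      have h4 := h3.const_mul (1 / C)
      refine h4.congr_deriv ?_
      rw [hφ_def]
      field_simp
    have hint2 : IntegrableOn (fun τ => h τ * φ (H τ)) (Icc 0 T) :=
      hh_int.mul_continuousOn_of_subset (hφ_cont.comp_continuousOn hH_cont)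
        measurableSet_Icc isCompact_Icc Subset.rfl
    have hmono_int : (∫ τ in Ioc 0 m, h τ * y τ * Real.log (y τ)) ≤
        ∫ τ in Ioc 0 m, h τ * φ (H τ) := by
      rw [integral_Ioc_eq_integral_Ioo, integral_Ioc_eq_integral_Ioo]
      have hsub : Ioo (0:ℝ) m ⊆ Icc 0 T := fun τ hτ =>
        ⟨hτ.1.le, le_trans hτ.2.le hm.2⟩
      have hint1' : IntegrableOn (fun τ => h τ * y τ * Real.log (y τ)) (Ioo 0 m) := by
        have := hint1.mono_set hsub
        simpa [mul_assoc] using this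
      apply setIntegral_mono_on hint1' (hint2.mono_set hsub) measurableSet_Ioo
      intro τ hτ
      have hτIcc : τ ∈ Icc 0 T := hsub hτ
      have h1 : y τ ≤ B τ := hless τ hτ.1 hτ.2
      have hy1' : 1 ≤ y τ := hy1 τ hτIcc
      have hB1 : (1:ℝ) ≤ B τ := le_trans hy1' h1
      have hlog : Real.log (y τ) ≤ Real.log (B τ) := Real.log_le_log (hy_pos τ hτIcc) h1
      have hlognn : 0 ≤ Real.log (y τ) := Real.log_nonneg hy1'
      have hyB : y τ * Real.log (y τ) ≤ B τ * Real.log (B τ) :=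
        mul_le_mul h1 hlog hlognn (by linarith)
      have hBφ : B τ * Real.log (B τ) = φ (H τ) := by
        rw [hB_def]
        simp only
        rw [Real.log_exp]
        ring
      calc h τ * y τ * Real.log (y τ) = h τ * (y τ * Real.log (y τ)) := by ring
        _ ≤ h τ * (B τ * Real.log (B τ)) :=
            mul_le_mul_of_nonneg_left hyB (hh_nonneg τ hτIcc)
        _ = h τ * φ (H τ) := by rw [hBφ]
    have hkey := key_int T h φ Φ hh_int hh_nonneg hφ_mono hφ_cont hΦ_deriv m hm.1 hm.2
    have hΦval : C * (Φ (H m) - Φ 0) = B m - Real.exp (K + ε) := by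
      rw [hΦ_def, hB_def]
      simp only
      rw [mul_zero, Real.exp_zero, mul_one]
      field_simp
    have hfin : y m ≤ Real.exp K + B m - Real.exp (K + ε) := by
      have h1 := hineq m hm
      have h2 : C * (∫ τ in Ioc 0 m, h τ * y τ * Real.log (y τ)) ≤
          C * ∫ τ in Ioc 0 m, h τ * φ (H τ) :=
        mul_le_mul_of_nonneg_left hmono_int hC0.le
      have h3 : C * (∫ τ in Ioc 0 m, h τ * φ (H τ)) ≤ C * (Φ (H m) - Φ 0) :=
        mul_le_mul_of_nonneg_left hkey hC0.le
      rw [hΦval] at h3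
      rw [← haK]
      linarith
    have : Real.exp K < Real.exp (K + ε) := Real.exp_lt_exp.mpr (by linarith)
    linarith
  -- Step 2
  intro t ht
  rw [Real.rpow_def_of_pos ha_pos, ← hK_def, show (∫ τ in Ioc 0 t, h τ) = H t from rfl]
  by_contra hc
  push_neg at hc
  set M : ℝ := Real.exp (C * H t) with hM_def
  have hM0 : 0 < M := Real.exp_pos _
  have hyt : 0 < y t := hy_pos t ht
  have hKM : K * M < Real.log (y t) := by
    have := Real.log_lt_log (Real.exp_pos _) hc
    rwa [Real.log_exp] at this
  set ε : ℝ := (Real.log (y t) / M - K) / 2 with hε_def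
  have hεpos : 0 < ε := by
    rw [hε_def]
    have : K < Real.log (y t) / M := (lt_div_iff₀ hM0).mpr (by linarith)
    linarith
  have h1 := step1 ε hεpos t ht
  have h2 : (K + ε) * M < Real.log (y t) := by
    rw [hε_def]
    have hεM : ((Real.log (y t) / M - K) / 2) * M = (Real.log (y t) - K * M) / 2 := by
      field_simp
    nlinarith
  have h3 : Real.exp ((K + ε) * M) < y t := by
    rw [← Real.exp_log hyt]
    exact Real.exp_lt_exp.mpr h2
  linarith
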